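/- Let p : Y → X be a semicovering map with p(y₀) = x₀. If α ∈ (𝒫X)_{x₀} is a well-targeted path, then its unique lift α̃ starting at y₀ is a well-targeted path in Y. -/
import Mathlib


open unitInterval

variable {X Y : Type*} [TopologicalSpace X] [TopologicalSpace Y]

/-- The space of paths in `X` starting at `x`, with the compact-open topology. -/
abbrev PathsFrom (X : Type*) [TopologicalSpace X] (x : X) : Type _ :=
  {α : C(I, X) // α 0 = x}

/-- Postcomposition `𝒫p : (𝒫Y)_y → (𝒫X)_{p(y)}`. -/
def pathPost (p : C(Y, X)) (y : Y) (α : PathsFrom Y y) : PathsFrom X (p y) :=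
  ⟨p.comp α.1, by simp [α.2]⟩

/-- The space of homotopies of paths starting at `x` (the initial-endpoint edge is fixed at `x`),
with the compact-open topology. -/
abbrev HtpysFrom (X : Type*) [TopologicalSpace X] (x : X) : Type _ :=
  {φ : C(I × I, X) // ∀ s, φ (s, 0) = x}

/-- Postcomposition `Φp : (ΦY)_y → (ΦX)_{p(y)}`. -/
def htpyPost (p : C(Y, X)) (y : Y) (φ : HtpysFrom Y y) : HtpysFrom X (p y) :=
  ⟨p.comp φ.1, by simp [φ.2]⟩

/-- A semicovering map: a local homeomorphism with continuous lifting of paths and homotopies. -/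
structure IsSemicoveringMap (p : C(Y, X)) : Prop where
  isLocalHomeomorph : IsLocalHomeomorph p
  pathLifting : ∀ y : Y, IsHomeomorph (pathPost p y)
  htpyLifting : ∀ y : Y, IsHomeomorph (htpyPost p y)
open unitInterval Topology

/-- A path `α` is well-targeted if every neighborhood `U` of `α` in the space of paths
starting at `α 0` admits an open neighborhood `V` of `α 1` each of whose points is the
endpoint of some path in `U`. -/
def IsWellTargeted {X : Type*} [TopologicalSpace X] (α : C(I, X)) : Prop :=
  ∀ U : Set {β : C(I, X) // β 0 = α 0}, IsOpen U →
    (⟨α, rfl⟩ : {β : C(I, X) // β 0 = α 0}) ∈ U →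
    ∃ V : Set X, IsOpen V ∧ α 1 ∈ V ∧ ∀ b ∈ V, ∃ β ∈ U, β.1 1 = b


/-- Lifts of well-targeted paths through a semicovering are well-targeted: if `p` is a
semicovering with `p y₀ = x₀` and `α` is a well-targeted path starting at `x₀`, then the
(unique) lift of `α` starting at `y₀` is well-targeted. -/
theorem isWellTargeted_lift {X Y : Type*} [TopologicalSpace X] [TopologicalSpace Y]
    (p : C(Y, X)) (hp : IsSemicoveringMap p) (y₀ : Y) (α : C(I, X)) (hα : α 0 = p y₀)
    (hwt : IsWellTargeted α) :
    ∀ γ : C(I, Y), γ 0 = y₀ → p.comp γ = α → IsWellTargeted γ := by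
  intro γ hγ0 hpγ U hUopen hγU
  have e0 : α 0 = p (γ 0) := by rw [hγ0, hα]
  obtain ⟨H, hH⟩ := isHomeomorph_iff_exists_homeomorph.mp (hp.pathLifting (γ 0))
  obtain ⟨ph, hmem, hpe⟩ := hp.isLocalHomeomorph (γ 1)
  set j : {β : C(I, X) // β 0 = α 0} → {β : C(I, X) // β 0 = p (γ 0)} :=
    fun β => ⟨β.1, β.2.trans e0⟩ with hjdef
  have hjc : Continuous j := continuous_subtype_val.subtype_mk _
  set 𝒰 : Set {β : C(I, X) // β 0 = p (γ 0)} :=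
    (⇑H '' U) ∩ {β | (H.symm β).1 1 ∈ ph.source} with h𝒰def
  have h𝒰open : IsOpen 𝒰 := by
    refine (H.isOpenMap U hUopen).inter ?_
    exact ph.open_source.preimage
      (((continuous_eval_const 1).comp continuous_subtype_val).comp
        H.continuous_symm)
  have hαH : H (⟨γ, rfl⟩ : PathsFrom Y (γ 0)) = ⟨α, e0⟩ := by
    rw [hH]
    exact Subtype.ext (by simp [pathPost, hpγ])
  have hα𝒰 : (⟨α, e0⟩ : {β : C(I, X) // β 0 = p (γ 0)}) ∈ 𝒰 := by
    constructor
    · exact ⟨⟨γ, rfl⟩, hγU, hαH⟩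
    · show (H.symm ⟨α, e0⟩).1 1 ∈ ph.source
      rw [← hαH, H.symm_apply_apply]
      exact hmem
  obtain ⟨V, hVopen, hαV, hV⟩ := hwt (j ⁻¹' 𝒰) (h𝒰open.preimage hjc) hα𝒰
  have hpγ1 : p (γ 1) = α 1 := by
    have := congrArg (fun f : C(I, X) => f 1) hpγ
    simpa using this
  refine ⟨ph.source ∩ p ⁻¹' V, ph.open_source.inter (hVopen.preimage p.continuous),
    ⟨hmem, by simp [hpγ1, hαV]⟩, ?_⟩
  rintro b' ⟨hb's, hb'V⟩
  obtain ⟨β, hβ𝒰, hβ1⟩ := hV (p b') hb'V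
  obtain ⟨⟨δ, hδU, hδeq⟩, hβend⟩ := hβ𝒰
  have hδ : H.symm (j β) = δ := by rw [← hδeq, H.symm_apply_apply]
  have hproj : p ((H.symm (j β)).1 1) = (j β).1 1 := by
    have h1 : H (H.symm (j β)) = j β := H.apply_symm_apply _
    rw [hH] at h1
    have := congrArg (fun f : {β : C(I, X) // β 0 = p (γ 0)} => f.1 1) h1
    simpa [pathPost] using this
  have hend : (H.symm (j β)).1 1 = b' := by
    have hinj := ph.injOn
    have h1 : (H.symm (j β)).1 1 ∈ ph.source := hβend
    have h2 : ph ((H.symm (j β)).1 1) = ph b' := by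
      rw [← congrFun hpe, ← congrFun hpe, hproj]
      exact hβ1
    exact hinj h1 hb's h2
  exact ⟨H.symm (j β), hδ ▸ hδU, hend⟩
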